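/- Let h⊥, v : ℝ → ℝ^{N−1} be differentiable, let H : ℝ → (N−1)×(N−1) symmetric real matrices be differentiable, and set h := tr H. Suppose the −1 flow system for SU(N)/SO(N) holds: h⊥′ = −h·v − vH, h′ = 2 v · h⊥, and H′ = v⊗h⊥ + h⊥⊗v, where vH denotes the row vector (vH)_j = Σ_i v_i H_{ij}. Then the quantity |h⊥|² + (1/2)(h² + tr(H²)) is constant, i.e. its derivative vanishes identically. (This is the conservation law 0 = D_x(|h⊥|² + ½(h² + |𝐡|²)) corresponding to 0 = ∇_x|γ_t|²_g for the wave map flow on SU(N)/SO(N).) -/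

import Mathlib

open Matrix

/-- let `h⊥, v : ℝ → ℝ^{N−1}` and `H : ℝ → Sym(N−1)` be differentiable with
`h := tr H`, satisfying the −1 flow system for `SU(N)/SO(N)`: `h⊥′ = −h·v − vH`,
`h′ = 2 v · h⊥`, and `H′ = v⊗h⊥ + h⊥⊗v`.  Then `|h⊥|² + (1/2)(h² + tr(H²))` is constant. -/
theorem statement_17 (N : ℕ) (hN : 2 ≤ N)
    (hperp v : ℝ → Fin (N - 1) → ℝ)
    (H : ℝ → Matrix (Fin (N - 1)) (Fin (N - 1)) ℝ)
    (hHsymm : ∀ x, (H x)ᵀ = H x)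
    (hhperpdiff : ∀ i, Differentiable ℝ (fun x => hperp x i))
    (hvdiff : ∀ i, Differentiable ℝ (fun x => v x i))
    (hHdiff : ∀ i j, Differentiable ℝ (fun x => H x i j))
    (heq1 : ∀ x i, deriv (fun y => hperp y i) x
        = -((H x).trace * v x i) - Matrix.vecMul (v x) (H x) i)
    (heq2 : ∀ x, deriv (fun y => (H y).trace) x = 2 * (v x ⬝ᵥ hperp x))
    (heq3 : ∀ x i j, deriv (fun y => H y i j) x = v x i * hperp x j + hperp x i * v x j) :
    ∀ x, deriv (fun y => hperp y ⬝ᵥ hperp y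
        + (1 / 2 : ℝ) * ((H y).trace ^ 2 + (H y * H y).trace)) x = 0 := by
  intro x
  have hsym : ∀ i j, H x j i = H x i j := fun i j => congrFun (congrFun (hHsymm x) i) j
  have hp : ∀ i, HasDerivAt (fun y => hperp y i)
      (-((H x).trace * v x i) - Matrix.vecMul (v x) (H x) i) x := fun i => by
    have h := ((hhperpdiff i) x).hasDerivAt
    rwa [heq1 x i] at h
  have hH : ∀ i j, HasDerivAt (fun y => H y i j)
      (v x i * hperp x j + hperp x i * v x j) x := fun i j => by
    have h := ((hHdiff i j) x).hasDerivAt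
    rwa [heq3 x i j] at h
  have htrdiff : Differentiable ℝ (fun y => (H y).trace) := by
    have : (fun y => (H y).trace) = fun y => ∑ i, H y i i := by
      funext y; simp [Matrix.trace, Matrix.diag]
    rw [this]
    exact Differentiable.fun_sum fun i _ => hHdiff i i
  have htr : HasDerivAt (fun y => (H y).trace) (2 * (v x ⬝ᵥ hperp x)) x := by
    have h := (htrdiff x).hasDerivAt
    rwa [heq2 x] at h
  have h1 : HasDerivAt (fun y => hperp y ⬝ᵥ hperp y)
      (∑ i, ((-((H x).trace * v x i) - Matrix.vecMul (v x) (H x) i) * hperp x i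
        + hperp x i * (-((H x).trace * v x i) - Matrix.vecMul (v x) (H x) i))) x := by
    have : (fun y => hperp y ⬝ᵥ hperp y) = fun y => ∑ i, hperp y i * hperp y i := by
      funext y; simp [dotProduct]
    rw [this]
    exact HasDerivAt.fun_sum fun i _ => (hp i).mul (hp i)
  have h2 : HasDerivAt (fun y => (H y).trace ^ 2)
      (2 * (H x).trace ^ 1 * (2 * (v x ⬝ᵥ hperp x))) x := by
    simpa using (show HasDerivAt (fun y => (H y).trace ^ 2) _ x from htr.pow 2)
  have h3 : HasDerivAt (fun y => (H y * H y).trace)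
      (∑ i, ∑ j, ((v x i * hperp x j + hperp x i * v x j) * H x j i
        + H x i j * (v x j * hperp x i + hperp x j * v x i))) x := by
    have : (fun y => (H y * H y).trace) = fun y => ∑ i, ∑ j, H y i j * H y j i := by
      funext y; simp [Matrix.trace, Matrix.diag, Matrix.mul_apply]
    rw [this]
    exact HasDerivAt.fun_sum fun i _ => HasDerivAt.fun_sum fun j _ => (hH i j).mul (hH j i)
  have hD := (h1.add (((h2.add h3)).const_mul (1/2 : ℝ)))
  rw [show deriv (fun y => hperp y ⬝ᵥ hperp y
      + (1 / 2 : ℝ) * ((H y).trace ^ 2 + (H y * H y).trace)) x = _ from hD.deriv]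
  set a := hperp x with ha
  set b := v x with hb
  set M := H x with hM
  have hw : ∀ i, Matrix.vecMul b M i = ∑ j, b j * M j i := fun i => by
    simp [Matrix.vecMul, dotProduct]
  have h4 : (∑ i, ((-(M.trace * b i) - Matrix.vecMul b M i) * a i
        + a i * (-(M.trace * b i) - Matrix.vecMul b M i)))
      = -(2 * M.trace * (b ⬝ᵥ a)) - 2 * ∑ i, ∑ j, b j * M j i * a i := by
    have step : ∀ i ∈ Finset.univ, (-(M.trace * b i) - Matrix.vecMul b M i) * a i
        + a i * (-(M.trace * b i) - Matrix.vecMul b M i)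
        = -(2 * M.trace * (b i * a i)) - 2 * ((∑ j, b j * M j i) * a i) := by
      intro i _
      rw [hw i]; ring
    rw [Finset.sum_congr rfl step, Finset.sum_sub_distrib]
    congr 1
    · rw [Finset.sum_neg_distrib, dotProduct, Finset.mul_sum]
    · rw [Finset.mul_sum]
      exact Finset.sum_congr rfl fun i _ => by rw [Finset.sum_mul]
  have hswap : (∑ i, ∑ j, b i * a j * M j i) = ∑ i, ∑ j, b j * M j i * a i := by
    rw [Finset.sum_comm]
    exact Finset.sum_congr rfl fun j _ => Finset.sum_congr rfl fun i _ => by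
      rw [hsym]; ring
  have h5 : (∑ i, ∑ j, ((b i * a j + a i * b j) * M j i
        + M i j * (b j * a i + a j * b i)))
      = 4 * ∑ i, ∑ j, b j * M j i * a i := by
    have step : ∀ i ∈ Finset.univ, ∀ j ∈ Finset.univ,
        (b i * a j + a i * b j) * M j i + M i j * (b j * a i + a j * b i)
        = 2 * (b i * a j * M j i) + 2 * (b j * M j i * a i) := by
      intro i _ j _
      rw [hsym i j]; ring
    calc (∑ i, ∑ j, ((b i * a j + a i * b j) * M j i + M i j * (b j * a i + a j * b i)))
        = ∑ i, ∑ j, (2 * (b i * a j * M j i) + 2 * (b j * M j i * a i)) :=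
          Finset.sum_congr rfl fun i hi => Finset.sum_congr rfl (step i hi)
      _ = 2 * (∑ i, ∑ j, b i * a j * M j i) + 2 * ∑ i, ∑ j, b j * M j i * a i := by
          simp [Finset.sum_add_distrib, Finset.mul_sum]
      _ = 4 * ∑ i, ∑ j, b j * M j i * a i := by rw [hswap]; ring
  rw [h4, h5]
  ring
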